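/- For any reduced word w in F_n, the function se_w = l_w - r_{w^{-1}} maps, under the linear map p_u ↦ φ_u = p_u - p_{u^{-1}}, to 2(l_w - r_{w^{-1}}), which is a bounded function on F_n; hence se_w lies in the kernel K_Br of the composition C(F_n) → Br(F_n) → Br(F_n)/∼. -/

import Mathlib

open List Finset

/-- Number of occurrences of `w` as a contiguous subword of `v`. -/
def occ {α : Type*} [DecidableEq α] (w v : List α) : ℕ :=
  ((List.range (v.length + 1 - w.length)).filter (fun i => decide (w <+: v.drop i))).length

/-- Elementary counting function, with the convention `p_ε(v) = |v|`. -/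
def cnt {α : Type*} [DecidableEq α] (w v : List α) : ℚ :=
  if w = [] then v.length else occ w v

/-- The inverse of a letter of `S̄`: letters are pairs (generator, sign). -/
def invL {n : ℕ} (a : Fin n × Bool) : Fin n × Bool := (a.1, !a.2)

/-- The inverse of a (reduced) word. -/
def invW {n : ℕ} (w : List (Fin n × Bool)) : List (Fin n × Bool) := (w.map invL).reverse

def redB {n : ℕ} : List (Fin n × Bool) → Bool
  | a :: b :: t => decide (b ≠ invL a) && redB (b :: t)
  | _ => true

/-- A word over `S̄` is reduced if no letter is followed by its inverse. -/
def Red {n : ℕ} (w : List (Fin n × Bool)) : Prop := redB w = true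

instance {n : ℕ} : DecidablePred (Red (n := n)) := fun _ => instDecidableEqBool _ _

/-- Left extension relation `l_w = p_w - Σ_{s : sw reduced} p_{sw}`. -/
def lgrp {n : ℕ} (w v : List (Fin n × Bool)) : ℚ :=
  cnt w v - ∑ s ∈ Finset.univ.filter (fun s => Red (s :: w)), cnt (s :: w) v

/-- Right extension relation `r_w = p_w - Σ_{s : ws reduced} p_{ws}`. -/
def rgrp {n : ℕ} (w v : List (Fin n × Bool)) : ℚ :=
  cnt w v - ∑ s ∈ Finset.univ.filter (fun s => Red (w ++ [s])), cnt (w ++ [s]) v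

/-- The map `σ₁` sending a function on F_n to `f - f ∘ (·⁻¹)`; on counting functions
it sends `p_w` to the Brooks quasimorphism `φ_w = p_w - p_{w⁻¹}`. -/
def sig1 {n : ℕ} (f : List (Fin n × Bool) → ℚ) : List (Fin n × Bool) → ℚ :=
  fun v => f v - f (invW v)

/-! ### Auxiliary lemmas -/

lemma occ_card {α : Type*} [DecidableEq α] (w v : List α) :
    occ w v = ((Finset.range (v.length + 1 - w.length)).filter (fun i => w <+: v.drop i)).card := by
  simp [occ, Finset.card, Finset.filter, Finset.range, Multiset.range, Multiset.filter_coe]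

lemma suffix_take_iff' {α : Type*} (x l : List α) (m : ℕ) (hm : m ≤ l.length) (hx : x.length ≤ m) :
    x <:+ take m l ↔ x <+: drop (m - x.length) l := by
  rw [List.suffix_iff_eq_drop, List.prefix_iff_eq_take, List.drop_take,
    List.length_take, min_eq_left hm]
  congr! 2
  omega

lemma rev_occ_iff {α : Type*} (w v : List α) (i : ℕ) (h : w.length ≤ v.length)
    (hi : i ≤ v.length - w.length) :
    w <+: drop i v.reverse ↔ w.reverse <+: drop (v.length - w.length - i) v := by
  rw [List.drop_reverse]
  rw [show w = w.reverse.reverse by simp, List.reverse_prefix, List.reverse_reverse]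
  rw [suffix_take_iff' _ _ _ (by omega) (by simp; omega)]
  congr! 2
  simp; omega

lemma occ_reverse {α : Type*} [DecidableEq α] (w v : List α) :
    occ w v.reverse = occ w.reverse v := by
  rcases le_or_gt w.length v.length with h | h
  · rw [occ_card, occ_card, List.length_reverse, List.length_reverse]
    apply Finset.card_nbij' (fun i => v.length - w.length - i) (fun j => v.length - w.length - j)
    · intro i hi
      simp only [Finset.coe_filter, Set.mem_setOf_eq, Finset.mem_filter, Finset.mem_range] at hi ⊢
      exact ⟨by omega, (rev_occ_iff w v i h (by omega)).mp hi.2⟩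
    · intro j hj
      simp only [Finset.coe_filter, Set.mem_setOf_eq, Finset.mem_filter, Finset.mem_range] at hj ⊢
      refine ⟨by omega, ?_⟩
      rw [rev_occ_iff w v _ h (by omega)]
      rw [show v.length - w.length - (v.length - w.length - j) = j by omega]
      exact hj.2
    · intro i hi
      simp only [Finset.coe_filter, Set.mem_setOf_eq, Finset.mem_filter, Finset.mem_range] at hi ⊢
      omega
    · intro j hj
      simp only [Finset.coe_filter, Set.mem_setOf_eq, Finset.mem_filter, Finset.mem_range] at hj ⊢
      omega
  · rw [occ_card, occ_card]
    rw [show v.reverse.length + 1 - w.length = 0 by simp; omega,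
      show v.length + 1 - w.reverse.length = 0 by simp; omega]
    simp

lemma occ_map_inj {α β : Type*} [DecidableEq α] [DecidableEq β] (f : α → β)
    (hf : Function.Injective f) (w v : List α) :
    occ (w.map f) (v.map f) = occ w v := by
  simp only [occ, List.length_map]
  congr 1
  apply List.filter_congr
  intro i _
  simp only [decide_eq_decide, ← List.map_drop]
  constructor
  · intro hp
    rw [List.prefix_iff_eq_take] at hp ⊢
    rw [List.length_map, ← List.map_take] at hp
    exact List.map_injective_iff.mpr hf hp
  · exact fun hp => hp.map f

lemma invL_invL {n : ℕ} (a : Fin n × Bool) : invL (invL a) = a := by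
  simp [invL]

lemma invL_inj {n : ℕ} : Function.Injective (invL (n := n)) := by
  intro a b h
  have := congrArg invL h
  simpa [invL_invL] using this

lemma map_invL_invL {n : ℕ} (w : List (Fin n × Bool)) : (w.map invL).map invL = w := by
  induction w with
  | nil => rfl
  | cons a t ih => simp only [List.map_cons, invL_invL, ih]

lemma invW_invW {n : ℕ} (w : List (Fin n × Bool)) : invW (invW w) = w := by
  show (((w.map invL).reverse.map invL)).reverse = w
  rw [← List.map_reverse, List.reverse_reverse, map_invL_invL]

lemma length_invW {n : ℕ} (w : List (Fin n × Bool)) : (invW w).length = w.length := by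
  simp [invW]

lemma invW_cons {n : ℕ} (s : Fin n × Bool) (w : List (Fin n × Bool)) :
    invW (s :: w) = invW w ++ [invL s] := by
  simp [invW]

lemma invW_eq_nil {n : ℕ} {w : List (Fin n × Bool)} : invW w = [] ↔ w = [] := by
  constructor
  · intro h
    have := congrArg List.length h
    simpa [length_invW] using this
  · rintro rfl; rfl

lemma occ_invW {n : ℕ} (u v : List (Fin n × Bool)) : occ u (invW v) = occ (invW u) v := by
  have h1 : invW u = (u.reverse.map invL) := by simp [invW, List.map_reverse]
  rw [invW, occ_reverse, h1]
  have h2 := occ_map_inj invL invL_inj (u.reverse.map invL) v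
  rw [map_invL_invL] at h2
  exact h2

lemma cnt_invW {n : ℕ} (u v : List (Fin n × Bool)) : cnt u (invW v) = cnt (invW u) v := by
  unfold cnt
  rcases eq_or_ne u [] with rfl | hu
  · simp [invW, length_invW]
  · rw [if_neg hu, if_neg (by simpa [invW_eq_nil] using hu), occ_invW]

lemma red_iff_chain' {n : ℕ} (w : List (Fin n × Bool)) :
    Red w ↔ w.Chain' (fun a b => b ≠ invL a) := by
  induction w with
  | nil => simp [Red, redB, List.Chain']
  | cons a t ih =>
    cases t with
    | nil => simp [Red, redB, List.Chain']
    | cons b t2 =>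
      simp only [List.Chain'] at ih ⊢
      rw [List.isChain_cons_cons, ← ih]
      simp only [Red, redB, Bool.and_eq_true, decide_eq_true_eq]

lemma red_invW {n : ℕ} {w : List (Fin n × Bool)} (h : Red w) : Red (invW w) := by
  rw [red_iff_chain'] at h ⊢
  simp only [List.Chain'] at h ⊢
  rw [invW, List.isChain_reverse, List.isChain_map]
  apply h.imp
  intro a b hab
  beta_reduce
  intro he
  apply hab
  rw [invL_invL] at he
  exact he.symm

lemma red_invW_iff {n : ℕ} {w : List (Fin n × Bool)} : Red (invW w) ↔ Red w := by
  constructor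
  · intro h
    have := red_invW h
    rwa [invW_invW] at this
  · exact red_invW

lemma red_tail {n : ℕ} {a : Fin n × Bool} {v : List (Fin n × Bool)} (h : Red (a :: v)) :
    Red v := by
  cases v with
  | nil => rfl
  | cons b t =>
    simp only [Red, redB, Bool.and_eq_true] at h
    exact h.2

lemma occ_cons {α : Type*} [DecidableEq α] (w : List α) (a : α) (v : List α) :
    occ w (a :: v) = (if w <+: a :: v then 1 else 0) + occ w v := by
  rcases le_or_gt w.length (v.length + 1) with h | h
  · simp only [occ, List.length_cons]
    rw [show v.length + 1 + 1 - w.length = (v.length + 1 - w.length) + 1 by omega]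
    rw [List.range_succ_eq_map]
    rw [← List.countP_eq_length_filter, ← List.countP_eq_length_filter,
      List.countP_cons, List.countP_map]
    simp only [List.drop_zero, Function.comp_def, List.drop_succ_cons]
    rcases Decidable.em (w <+: a :: v) with hp | hp <;> (simp [hp]; try omega)
  · have h0 : occ w (a :: v) = 0 := by
      simp only [occ, List.length_cons]
      rw [show v.length + 1 + 1 - w.length = 0 by omega]
      simp
    have h1 : occ w v = 0 := by
      simp only [occ]
      rw [show v.length + 1 - w.length = 0 by omega]
      simp
    have h2 : ¬ (w <+: a :: v) := by
      intro hp
      have := hp.length_le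
      simp at this; omega
    simp [h0, h1, h2]

lemma occ_nil_left {α : Type*} [DecidableEq α] (v : List α) : occ ([] : List α) v = v.length + 1 := by
  simp [occ, List.nil_prefix]

lemma occ_nil_right {α : Type*} [DecidableEq α] (w : List α) (hw : w ≠ []) :
    occ w ([] : List α) = 0 := by
  cases w with
  | nil => exact absurd rfl hw
  | cons a t =>
    simp only [occ, List.length_nil, List.length_cons]
    rw [show 0 + 1 - (t.length + 1) = 0 by omega]
    simp

lemma occ_split {α : Type*} [DecidableEq α] [Fintype α] (w v : List α) :
    occ w v = (if w <+: v then 1 else 0) + ∑ s : α, occ (s :: w) v := by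
  induction v with
  | nil =>
    have hz : ∑ s : α, occ (s :: w) ([] : List α) = 0 :=
      Finset.sum_eq_zero (fun s _ => occ_nil_right _ (by simp))
    rcases eq_or_ne w [] with rfl | hw
    · rw [occ_nil_left, if_pos List.nil_prefix, hz]
      simp
    · rw [occ_nil_right _ hw, if_neg (by simp [List.prefix_nil, hw]), hz]
  | cons a v ih =>
    rw [occ_cons, ih]
    have hsum : ∑ s : α, occ (s :: w) (a :: v)
        = ∑ s : α, ((if s :: w <+: a :: v then 1 else 0) + occ (s :: w) v) := by
      apply Finset.sum_congr rfl
      intro s _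
      rw [occ_cons]
    rw [hsum, Finset.sum_add_distrib]
    have hind : ∑ s : α, (if s :: w <+: a :: v then 1 else 0) = (if w <+: v then 1 else 0) := by
      rcases Decidable.em (w <+: v) with hp | hp
      · simp only [List.cons_prefix_cons, hp, and_true]
        simp
      · simp [List.cons_prefix_cons, hp]
    omega

lemma occ_bad_zero {n : ℕ} (a : Fin n × Bool) (t v : List (Fin n × Bool)) (hv : Red v) :
    occ (a :: invL a :: t) v = 0 := by
  induction v with
  | nil => exact occ_nil_right _ (by simp)
  | cons b v ih =>
    rw [occ_cons, ih (red_tail hv)]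
    have : ¬ (a :: invL a :: t <+: b :: v) := by
      rw [List.cons_prefix_cons]
      rintro ⟨rfl, h2⟩
      cases v with
      | nil => exact absurd h2.length_le (by simp)
      | cons c v' =>
        rw [List.cons_prefix_cons] at h2
        obtain ⟨hc, -⟩ := h2
        simp only [Red, redB, ← hc, Bool.and_eq_true, decide_eq_true_eq] at hv
        exact hv.1 rfl
    simp [this]

lemma lgrp_eval {n : ℕ} (w v : List (Fin n × Bool)) (hw : Red w) (hv : Red v) :
    lgrp w v = if w <+: v ∧ w ≠ [] then 1 else 0 := by
  rcases eq_or_ne w [] with rfl | hne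
  · have hfil : Finset.univ.filter (fun s : Fin n × Bool => Red (s :: ([] : List (Fin n × Bool))))
        = Finset.univ := by
      apply Finset.filter_true_of_mem
      intro s _
      rfl
    have hspl := occ_split ([] : List (Fin n × Bool)) v
    rw [occ_nil_left, if_pos List.nil_prefix] at hspl
    have hsum : ∑ s : Fin n × Bool, occ (s :: ([] : List (Fin n × Bool))) v = v.length := by
      omega
    have hs : (∑ s : Fin n × Bool, cnt [s] v) = (v.length : ℚ) := by
      have h1 : (∑ s : Fin n × Bool, cnt [s] v)
          = ((∑ s : Fin n × Bool, occ (s :: ([] : List (Fin n × Bool))) v : ℕ) : ℚ) := by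
        push_cast
        exact Finset.sum_congr rfl (fun s _ => by simp [cnt])
      rw [h1, hsum]
    rw [lgrp, hfil, if_neg (by simp), hs, show cnt ([] : List (Fin n × Bool)) v = (v.length : ℚ)
      from by simp [cnt]]
    ring
  · obtain ⟨w1, t, rfl⟩ : ∃ w1 t, w = w1 :: t := by
      cases w with
      | nil => exact absurd rfl hne
      | cons w1 t => exact ⟨w1, t, rfl⟩
    have hzero : ∀ s ∈ Finset.univ.filter (fun s : Fin n × Bool => ¬ Red (s :: w1 :: t)),
        occ (s :: w1 :: t) v = 0 := by
      intro s hs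
      simp only [Finset.mem_filter] at hs
      have hs2 := hs.2
      have : w1 = invL s := by
        by_contra hc
        apply hs2
        simp only [Red, redB, Bool.and_eq_true, decide_eq_true_eq]
        exact ⟨hc, hw⟩
      rw [this]
      exact occ_bad_zero s t v hv
    have hsplit := occ_split (w1 :: t) v
    have hfil := Finset.sum_filter_add_sum_filter_not Finset.univ
      (fun s : Fin n × Bool => Red (s :: w1 :: t)) (fun s => occ (s :: w1 :: t) v)
    rw [Finset.sum_eq_zero hzero, add_zero] at hfil
    rw [← hfil] at hsplit
    have hS : (∑ s ∈ Finset.univ.filter (fun s : Fin n × Bool => Red (s :: w1 :: t)),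
        cnt (s :: w1 :: t) v)
        = ((∑ s ∈ Finset.univ.filter (fun s : Fin n × Bool => Red (s :: w1 :: t)),
          occ (s :: w1 :: t) v : ℕ) : ℚ) := by
      push_cast
      exact Finset.sum_congr rfl (fun s _ => by simp [cnt])
    rw [lgrp, hS, show cnt (w1 :: t) v = ((occ (w1 :: t) v : ℕ) : ℚ) from by simp [cnt],
      hsplit]
    push_cast
    rcases Decidable.em ((w1 :: t) <+: v) with hp | hp <;> simp [hp]

lemma lgrp_abs_le {n : ℕ} (w v : List (Fin n × Bool)) (hw : Red w) (hv : Red v) :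
    |lgrp w v| ≤ 1 := by
  rw [lgrp_eval w v hw hv]
  split <;> norm_num

lemma lgrp_invW {n : ℕ} (w v : List (Fin n × Bool)) :
    lgrp w (invW v) = rgrp (invW w) v := by
  unfold lgrp rgrp
  rw [cnt_invW]
  congr 1
  apply Finset.sum_nbij' invL invL
  · intro s hs
    simp only [Finset.mem_filter, Finset.mem_univ, true_and] at hs ⊢
    have := red_invW hs
    rwa [invW_cons] at this
  · intro t ht
    simp only [Finset.mem_filter, Finset.mem_univ, true_and] at ht ⊢
    have := red_invW ht
    rw [show invW (invW w ++ [t]) = invL t :: invW (invW w) by simp [invW], invW_invW] at this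
    exact this
  · intro s _; exact invL_invL s
  · intro t _; exact invL_invL t
  · intro s _
    rw [cnt_invW, invW_cons]

/-- For any reduced word w, the symmetrized extension relation se_w = l_w - r_{w⁻¹}
is mapped by σ₁ to 2(l_w - r_{w⁻¹}), which is bounded on F_n; moreover se_w is a
counting function, hence se_w lies in the kernel K_Br of σ = σ₂ ∘ σ₁. -/
theorem stmt_8 (n : ℕ) (hn : 2 ≤ n) (w : List (Fin n × Bool)) (hw : Red w) :
    (∀ v : List (Fin n × Bool), Red v →
      sig1 (fun u => lgrp w u - rgrp (invW w) u) v = 2 * (lgrp w v - rgrp (invW w) v)) ∧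
    (∃ C : ℚ, ∀ v : List (Fin n × Bool), Red v →
      |sig1 (fun u => lgrp w u - rgrp (invW w) u) v| ≤ C) ∧
    (fun u => lgrp w u - rgrp (invW w) u) ∈
      Submodule.span ℚ {g : List (Fin n × Bool) → ℚ | ∃ u, Red u ∧ g = cnt u} := by
  have key : ∀ v : List (Fin n × Bool),
      sig1 (fun u => lgrp w u - rgrp (invW w) u) v = 2 * (lgrp w v - rgrp (invW w) v) := by
    intro v
    simp only [sig1]
    have h1 : lgrp w (invW v) = rgrp (invW w) v := lgrp_invW w v
    have h2 : rgrp (invW w) (invW v) = lgrp w v := by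
      have := lgrp_invW w (invW v)
      rw [invW_invW] at this
      exact this.symm
    rw [h1, h2]
    ring
  refine ⟨fun v _ => key v, ⟨4, fun v hv => ?_⟩, ?_⟩
  · rw [key v]
    have hl : |lgrp w v| ≤ 1 := lgrp_abs_le w v hw hv
    have hr : |rgrp (invW w) v| ≤ 1 := by
      rw [← lgrp_invW]
      exact lgrp_abs_le w (invW v) hw (red_invW hv)
    calc |2 * (lgrp w v - rgrp (invW w) v)| = 2 * |lgrp w v - rgrp (invW w) v| := by
          rw [abs_mul]; norm_num
      _ ≤ 2 * (|lgrp w v| + |rgrp (invW w) v|) := by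
          have := abs_sub (lgrp w v) (rgrp (invW w) v)
          linarith
      _ ≤ 4 := by linarith
  · have hfun : (fun u => lgrp w u - rgrp (invW w) u)
        = (cnt w - (∑ s ∈ Finset.univ.filter (fun s => Red (s :: w)), cnt (s :: w)))
          - (cnt (invW w) - (∑ s ∈ Finset.univ.filter (fun s => Red (invW w ++ [s])),
              cnt (invW w ++ [s]))) := by
      funext u
      simp only [lgrp, rgrp, Pi.sub_apply, Finset.sum_apply]
    rw [hfun]
    apply sub_mem
    · apply sub_mem
      · exact Submodule.subset_span ⟨w, hw, rfl⟩
      · apply Submodule.sum_mem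
        intro s hs
        simp only [Finset.mem_filter] at hs
        exact Submodule.subset_span ⟨s :: w, hs.2, rfl⟩
    · apply sub_mem
      · exact Submodule.subset_span ⟨invW w, red_invW hw, rfl⟩
      · apply Submodule.sum_mem
        intro s hs
        simp only [Finset.mem_filter] at hs
        exact Submodule.subset_span ⟨invW w ++ [s], hs.2, rfl⟩
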